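/- The uncorrected instanton-side Kramers prefactor for Neumann boundary conditions diverges like m^{−1/2} at the bifurcation: with L(m) = 2√(1+m)·K(m) and μ₀(m) = 1 − (2/(m+1))√(m² − m + 1), one has lim_{m → 0⁺} √m · (1/π)·|μ₀(m)|·√( sinh(√2·L(m)) / (√2·|(1−m)K(m) − (1+m)E(m)|) ) = (2/π)·√( sinh(√2 π)/(3√2 π) ). -/

import Mathlib

open Real Filter Set

/-- The complete elliptic integral of the first kind,
`K(m) = ∫₀^{π/2} (1 − m sin²θ)^{−1/2} dθ`. -/
noncomputable def ellipticK (m : ℝ) : ℝ :=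
  ∫ θ in (0:ℝ)..(π / 2), (1 - m * Real.sin θ ^ 2) ^ (-(1 : ℝ) / 2)

/-- The complete elliptic integral of the second kind,
`E(m) = ∫₀^{π/2} √(1 − m sin²θ) dθ`. -/
noncomputable def ellipticE (m : ℝ) : ℝ :=
  ∫ θ in (0:ℝ)..(π / 2), Real.sqrt (1 - m * Real.sin θ ^ 2)

noncomputable def gK (m θ : ℝ) : ℝ := (max (1 - m * Real.sin θ ^ 2) (1/2)) ^ (-(1:ℝ)/2)

noncomputable def gF (m θ : ℝ) : ℝ := ((1 + m) * Real.sin θ ^ 2 - 2) * gK m θ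

lemma base_ge (m θ : ℝ) (hm : |m| ≤ 1/2) : (1:ℝ)/2 ≤ 1 - m * Real.sin θ ^ 2 := by
  have h1 : Real.sin θ ^ 2 ≤ 1 := Real.sin_sq_le_one θ
  have h0 : 0 ≤ Real.sin θ ^ 2 := sq_nonneg _
  have := abs_le.mp hm
  nlinarith

lemma gK_cont : Continuous (Function.uncurry gK) := by
  apply Continuous.rpow_const
  · exact (continuous_const.sub ((continuous_fst).mul
      ((Real.continuous_sin.comp continuous_snd).pow 2))).max continuous_const
  · intro p
    left
    have : (1:ℝ)/2 ≤ max (1 - p.1 * Real.sin p.2 ^ 2) (1/2) := le_max_right _ _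
    positivity

lemma gF_cont : Continuous (Function.uncurry gF) := by
  have : Function.uncurry gF = fun p : ℝ × ℝ =>
      ((1 + p.1) * Real.sin p.2 ^ 2 - 2) * Function.uncurry gK p := rfl
  rw [this]
  exact (((continuous_const.add continuous_fst).mul
    ((Real.continuous_sin.comp continuous_snd).pow 2)).sub continuous_const).mul gK_cont

lemma gK_eq (m θ : ℝ) (hm : |m| ≤ 1/2) :
    gK m θ = (1 - m * Real.sin θ ^ 2) ^ (-(1:ℝ)/2) := by
  unfold gK
  rw [max_eq_left (base_ge m θ hm)]

noncomputable def KK (m : ℝ) : ℝ := ∫ θ in (0:ℝ)..(π/2), gK m θ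
noncomputable def FF (m : ℝ) : ℝ := ∫ θ in (0:ℝ)..(π/2), gF m θ

lemma KK_cont : Continuous KK :=
  intervalIntegral.continuous_parametric_intervalIntegral_of_continuous' gK_cont 0 (π/2)

lemma FF_cont : Continuous FF :=
  intervalIntegral.continuous_parametric_intervalIntegral_of_continuous' gF_cont 0 (π/2)

lemma ellipticK_eq (m : ℝ) (hm : |m| ≤ 1/2) : ellipticK m = KK m := by
  unfold ellipticK KK
  exact intervalIntegral.integral_congr (fun θ _ => (gK_eq m θ hm).symm)

lemma KK_zero : KK 0 = π/2 := by
  unfold KK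
  have : ∀ θ : ℝ, gK 0 θ = 1 := by
    intro θ
    rw [gK_eq 0 θ (by norm_num)]
    norm_num
  simp only [this]
  simp

lemma FF_zero : FF 0 = -(3*π/4) := by
  unfold FF
  have : ∀ θ : ℝ, gF 0 θ = Real.sin θ ^ 2 - 2 := by
    intro θ
    unfold gF
    rw [gK_eq 0 θ (by norm_num)]
    norm_num
  rw [intervalIntegral.integral_congr (fun θ _ => this θ)]
  rw [intervalIntegral.integral_sub (by apply Continuous.intervalIntegrable; fun_prop)
    intervalIntegrable_const]
  rw [integral_sin_sq]
  simp [Real.sin_pi_div_two, Real.cos_pi_div_two]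
  ring

lemma pointwise_id (m θ : ℝ) (hm : |m| ≤ 1/2) :
    (1 - m) * gK m θ - (1 + m) * Real.sqrt (1 - m * Real.sin θ ^ 2)
      = m * (((1 + m) * Real.sin θ ^ 2 - 2) * gK m θ) := by
  have hx : (1:ℝ)/2 ≤ 1 - m * Real.sin θ ^ 2 := base_ge m θ hm
  have hxpos : (0:ℝ) < 1 - m * Real.sin θ ^ 2 := by linarith
  have hg : gK m θ = (Real.sqrt (1 - m * Real.sin θ ^ 2))⁻¹ := by
    rw [gK_eq m θ hm, show (-(1:ℝ)/2) = -(1/2) by ring, Real.rpow_neg hxpos.le,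
      ← Real.sqrt_eq_rpow]
  have hss : Real.sqrt (1 - m * Real.sin θ ^ 2) * Real.sqrt (1 - m * Real.sin θ ^ 2)
      = 1 - m * Real.sin θ ^ 2 := Real.mul_self_sqrt hxpos.le
  have hsne : Real.sqrt (1 - m * Real.sin θ ^ 2) ≠ 0 := by positivity
  rw [hg]
  field_simp
  linear_combination (-(1+m)) * hss

lemma key_identity (m : ℝ) (hm : |m| ≤ 1/2) :
    (1 - m) * ellipticK m - (1 + m) * ellipticE m = m * FF m := by
  rw [ellipticK_eq m hm]
  unfold KK ellipticE FF
  rw [← intervalIntegral.integral_const_mul, ← intervalIntegral.integral_const_mul,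
    ← intervalIntegral.integral_const_mul,
    ← intervalIntegral.integral_sub]
  · exact intervalIntegral.integral_congr (fun θ _ => pointwise_id m θ hm)
  · apply Continuous.intervalIntegrable
    exact continuous_const.mul (gK_cont.comp (continuous_const.prodMk continuous_id))
  · apply Continuous.intervalIntegrable
    apply continuous_const.mul
    exact (continuous_const.sub (continuous_const.mul
      (Real.continuous_sin.pow 2))).sqrt

/-- The uncorrected instanton-side Kramers prefactor for Neumann boundary
conditions diverges like `m^{−1/2}` at the bifurcation: with `L(m) = 2√(1+m)·K(m)` and
`μ₀(m) = 1 − (2/(m+1))√(m² − m + 1)`, one has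
`lim_{m → 0⁺} √m · (1/π)·|μ₀(m)|·√( sinh(√2·L(m)) / (√2·|(1−m)K(m) − (1+m)E(m)|) )
  = (2/π)·√( sinh(√2 π)/(3√2 π) )`. -/
theorem stmt_18 :
    Tendsto (fun m : ℝ =>
        Real.sqrt m * ((1 / π) *
          |1 - (2 / (m + 1)) * Real.sqrt (m ^ 2 - m + 1)| *
          Real.sqrt (Real.sinh (Real.sqrt 2 * (2 * Real.sqrt (1 + m) * ellipticK m)) /
            (Real.sqrt 2 * |(1 - m) * ellipticK m - (1 + m) * ellipticE m|))))
      (nhdsWithin 0 (Ioi 0))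
      (nhds ((2 / π) *
        Real.sqrt (Real.sinh (Real.sqrt 2 * π) / (3 * Real.sqrt 2 * π)))) := by
  have hpi : (0:ℝ) < π := Real.pi_pos
  set φ : ℝ → ℝ := fun m =>
    (1 / π) * |1 - (2 / (m + 1)) * Real.sqrt (m ^ 2 - m + 1)| *
      Real.sqrt (Real.sinh (Real.sqrt 2 * (2 * Real.sqrt (1 + m) * KK m)) /
        (Real.sqrt 2 * |FF m|)) with hφ
  have heq : ∀ᶠ m in nhdsWithin (0:ℝ) (Ioi 0),
      Real.sqrt m * ((1 / π) *
          |1 - (2 / (m + 1)) * Real.sqrt (m ^ 2 - m + 1)| *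
          Real.sqrt (Real.sinh (Real.sqrt 2 * (2 * Real.sqrt (1 + m) * ellipticK m)) /
            (Real.sqrt 2 * |(1 - m) * ellipticK m - (1 + m) * ellipticE m|))) = φ m := by
    filter_upwards [Ioo_mem_nhdsGT_of_mem (by norm_num : (0:ℝ) ∈ Ico 0 (1/2))] with m hm
    obtain ⟨hm0, hm1⟩ := hm
    have hmabs : |m| ≤ 1/2 := by rw [abs_of_pos hm0]; linarith
    rw [key_identity m hmabs, ellipticK_eq m hmabs]
    simp only [hφ]
    set A := Real.sinh (Real.sqrt 2 * (2 * Real.sqrt (1 + m) * KK m))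
    set c := |FF m|
    have habs : |m * FF m| = m * c := by rw [abs_mul, abs_of_pos hm0]
    rw [habs]
    have hinner : m * (A / (Real.sqrt 2 * (m * c))) = A / (Real.sqrt 2 * c) := by
      rcases eq_or_ne c 0 with hc | hc
      · simp [hc]
      · field_simp
    rw [← hinner, Real.sqrt_mul hm0.le]
    ring
  rw [tendsto_congr' heq]
  have hval : φ 0 = (2 / π) *
      Real.sqrt (Real.sinh (Real.sqrt 2 * π) / (3 * Real.sqrt 2 * π)) := by
    simp only [hφ, KK_zero, FF_zero]
    have h1 : |(1:ℝ) - 2 / (0 + 1) * Real.sqrt ((0:ℝ) ^ 2 - 0 + 1)| = 1 := by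
      norm_num
    have h2 : Real.sqrt 2 * (2 * Real.sqrt (1 + 0) * (π / 2)) = Real.sqrt 2 * π := by
      rw [show (1:ℝ) + 0 = 1 by norm_num, Real.sqrt_one]; ring
    have h3 : |-(3*π/4)| = 3*π/4 := by rw [abs_neg, abs_of_pos]; positivity
    rw [h1, h2, h3]
    have hS : 0 ≤ Real.sinh (Real.sqrt 2 * π) := Real.sinh_nonneg_iff.mpr (by positivity)
    have hsqrt2 : (0:ℝ) < Real.sqrt 2 := by positivity
    have h4 : Real.sinh (Real.sqrt 2 * π) / (Real.sqrt 2 * (3 * π / 4))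
        = 4 * (Real.sinh (Real.sqrt 2 * π) / (3 * Real.sqrt 2 * π)) := by
      field_simp
    rw [h4, Real.sqrt_mul (by norm_num : (0:ℝ) ≤ 4),
      show Real.sqrt 4 = 2 by
        rw [show (4:ℝ) = 2^2 by norm_num, Real.sqrt_sq (by norm_num : (0:ℝ) ≤ 2)]]
    ring
  rw [← hval]
  have hc : ContinuousAt φ 0 := by
    rw [hφ]
    have h1 : ContinuousAt
        (fun x : ℝ => 1 / π * |1 - 2 / (x + 1) * Real.sqrt (x ^ 2 - x + 1)|) 0 := by
      apply ContinuousAt.mul continuousAt_const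
      apply ContinuousAt.abs
      apply ContinuousAt.sub continuousAt_const
      apply ContinuousAt.mul
      · exact ContinuousAt.div continuousAt_const (by fun_prop) (by norm_num)
      · exact ContinuousAt.sqrt (by fun_prop)
    have h2 : ContinuousAt (fun x : ℝ =>
        Real.sqrt (Real.sinh (Real.sqrt 2 * (2 * Real.sqrt (1 + x) * KK x)) /
          (Real.sqrt 2 * |FF x|))) 0 := by
      apply ContinuousAt.sqrt
      apply ContinuousAt.div
      · exact (Real.continuous_sinh.comp (continuous_const.mul
          ((continuous_const.mul ((continuous_const.add continuous_id).sqrt)).mul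
            KK_cont))).continuousAt
      · exact ContinuousAt.mul continuousAt_const FF_cont.continuousAt.abs
      · rw [FF_zero]
        simp only [abs_neg]
        rw [abs_of_pos (by positivity : (0:ℝ) < 3*π/4)]
        positivity
    exact h1.mul h2
  exact hc.tendsto.mono_left nhdsWithin_le_nhds
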